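/- Let μ_{t_0}, μ_t be probability measures on ℝ^d with μ_t obtained as the mean of random pushforward measures: μ_t(dx) = ρ_{t_0}(x) E[π_{t,t_0}(x,ω)] dx, where for each ω, π_{t,t_0}(·,ω) is the density of the pushforward of μ_{t_0} under a diffeomorphism φ_{t,t_0}(·,ω), and α_{t,t_0}(·,ω) is the density of the corresponding pullback measure. If φ : (0,∞) → [0,∞) is convex with φ(1)=0, and φ_‡(z) := z φ(1/z), then D_φ(μ_t‖μ_{t_0}) ≤ ∫_{ℝ^d} E[ φ_‡(α_{t,t_0}(x,ω)) ] μ_{t_0}(dx). -/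
import Mathlib
open MeasureTheory
open scoped ENNReal

/-- Supporting line for a convex function on `Ioi 0`. -/
lemma subgrad_aux {φ : ℝ → ℝ} (hconv : ConvexOn ℝ (Set.Ioi 0) φ) {m : ℝ} (hm : 0 < m) :
    ∃ c : ℝ, ∀ z, 0 < z → φ m + c * (z - m) ≤ φ z := by
  set S : Set ℝ := (fun b => (φ b - φ m) / (b - m)) '' Set.Ioi m with hS
  have hSne : S.Nonempty := ⟨_, ⟨m + 1, by simp, rfl⟩⟩
  have hbdd : BddBelow S := by
    refine ⟨(φ m - φ (m / 2)) / (m - m / 2), ?_⟩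
    rintro y ⟨b, hb, rfl⟩
    exact hconv.slope_mono_adjacent (by simpa using half_pos hm)
      (lt_trans hm hb) (half_lt_self hm) hb
  refine ⟨sInf S, fun z hz => ?_⟩
  rcases lt_trichotomy z m with h | h | h
  · have hle : (φ m - φ z) / (m - z) ≤ sInf S := by
      refine le_csInf hSne ?_
      rintro y ⟨b, hb, rfl⟩
      exact hconv.slope_mono_adjacent hz (lt_trans hm hb) h hb
    have := (div_le_iff₀ (by linarith)).mp hle
    nlinarith [this]
  · simp [h]
  · have hle : sInf S ≤ (φ z - φ m) / (z - m) :=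
      csInf_le hbdd ⟨z, h, rfl⟩
    have := (le_div_iff₀ (by linarith)).mp hle
    nlinarith [this]

/-- Jensen's inequality in `lintegral` form for a convex function on `Ioi 0`. -/
lemma jensen_aux {Ω : Type*} [MeasurableSpace Ω] (P : Measure Ω) [IsProbabilityMeasure P]
    {φ : ℝ → ℝ} (hconv : ConvexOn ℝ (Set.Ioi 0) φ)
    {f : Ω → ℝ} (hfpos : ∀ ω, 0 < f ω) (hfi : Integrable f P)
    (hψ : AEStronglyMeasurable (fun ω => φ (f ω)) P)
    (hnn : ∀ ω, 0 ≤ φ (f ω))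
    (hm : 0 < ∫ ω, f ω ∂P) :
    ENNReal.ofReal (φ (∫ ω, f ω ∂P)) ≤ ∫⁻ ω, ENNReal.ofReal (φ (f ω)) ∂P := by
  by_cases hfin : ∫⁻ ω, ENNReal.ofReal (φ (f ω)) ∂P = ∞
  · simp [hfin]
  have hint : Integrable (fun ω => φ (f ω)) P := by
    refine ⟨hψ, ?_⟩
    rw [hasFiniteIntegral_iff_ofReal (Filter.Eventually.of_forall hnn)]
    exact lt_top_iff_ne_top.2 hfin
  set m := ∫ ω, f ω ∂P with hmdef
  obtain ⟨c, hc⟩ := subgrad_aux hconv hm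
  have hsub : Integrable (fun ω => f ω - m) P := hfi.sub (integrable_const m)
  have hmul : Integrable (fun ω => c * (f ω - m)) P := hsub.const_mul c
  have hlin : Integrable (fun ω => φ m + c * (f ω - m)) P := (integrable_const (φ m)).add hmul
  have h1 : ∫ ω, (φ m + c * (f ω - m)) ∂P = φ m := by
    rw [integral_add (integrable_const _) hmul, integral_const_mul,
      integral_sub hfi (integrable_const m)]
    simp [hmdef]
  have h2 : φ m ≤ ∫ ω, φ (f ω) ∂P := by
    rw [← h1]
    exact integral_mono hlin hint fun ω => hc _ (hfpos ω)
  calc ENNReal.ofReal (φ m) ≤ ENNReal.ofReal (∫ ω, φ (f ω) ∂P) := ENNReal.ofReal_le_ofReal h2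
    _ = ∫⁻ ω, ENNReal.ofReal (φ (f ω)) ∂P :=
      ofReal_integral_eq_lintegral_ofReal hint (Filter.Eventually.of_forall hnn)

/-- Bound on the φ-divergence of the averaged pushforward measure μ_t (with density
ρ_{t0}(x)E[π_{t,t0}(x,ω)]) from μ_{t0} in terms of the average of φ_‡(α_{t,t0}) where
φ_‡(z) = zφ(1/z) and α is the pullback density. -/
theorem stmt8 {d : ℕ} {Ω : Type*} [MeasurableSpace Ω] (P : Measure Ω) [IsProbabilityMeasure P]
    (ρ0 : EuclideanSpace ℝ (Fin d) → ℝ) (hρ0 : ∀ x, 0 < ρ0 x) (hρ0m : Measurable ρ0)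
    (μ0 : Measure (EuclideanSpace ℝ (Fin d)))
    (hμ0 : μ0 = volume.withDensity fun x => ENNReal.ofReal (ρ0 x))
    [IsProbabilityMeasure μ0]
    (F Finv : Ω → EuclideanSpace ℝ (Fin d) → EuclideanSpace ℝ (Fin d))
    (hFm : ∀ ω, Measurable (F ω)) (hFim : ∀ ω, Measurable (Finv ω))
    (hli : ∀ ω, Function.LeftInverse (Finv ω) (F ω))
    (hri : ∀ ω, Function.RightInverse (Finv ω) (F ω))
    (π α : EuclideanSpace ℝ (Fin d) → Ω → ℝ)
    (hπm : Measurable (Function.uncurry π)) (hαm : Measurable (Function.uncurry α))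
    (hπpos : ∀ x ω, 0 < π x ω) (hαpos : ∀ x ω, 0 < α x ω)
    (hmapπ : ∀ᵐ ω ∂P, μ0.map (F ω) = μ0.withDensity fun x => ENNReal.ofReal (π x ω))
    (hmapα : ∀ᵐ ω ∂P, μ0.map (Finv ω) = μ0.withDensity fun x => ENNReal.ofReal (α x ω))
    (hrel : ∀ᵐ ω ∂P, ∀ᵐ x ∂μ0, (π x ω)⁻¹ = α (Finv ω x) ω)
    (φ : ℝ → ℝ) (hconv : ConvexOn ℝ (Set.Ioi 0) φ) (hφ1 : φ 1 = 0)
    (hφnn : ∀ z ∈ Set.Ioi (0 : ℝ), 0 ≤ φ z)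
    (hint1 : Integrable (fun x => φ (∫ ω, π x ω ∂P)) μ0)
    (hint2 : Integrable (fun q : EuclideanSpace ℝ (Fin d) × Ω =>
      π q.1 q.2 * φ ((π q.1 q.2)⁻¹)) (μ0.prod P))
    (hint3 : Integrable (fun q : EuclideanSpace ℝ (Fin d) × Ω =>
      α q.1 q.2 * φ ((α q.1 q.2)⁻¹)) (μ0.prod P)) :
    ∫ x, φ (∫ ω, π x ω ∂P) ∂μ0 ≤ ∫ x, (∫ ω, α x ω * φ ((α x ω)⁻¹) ∂P) ∂μ0 := by
  classical
  -- measurable version of φ on the positive reals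
  set ψ : ℝ → ℝ := fun z => if h : z ∈ Set.Ioi (0 : ℝ) then φ z else 0 with hψdef
  have hψeq : ∀ z : ℝ, 0 < z → ψ z = φ z := fun z hz => dif_pos hz
  have mψ : Measurable ψ :=
    Measurable.dite (s := Set.Ioi (0 : ℝ))
      (continuousOn_iff_continuous_restrict.mp
        (hconv.continuousOn isOpen_Ioi)).measurable
      measurable_const measurableSet_Ioi
  -- measurability of the two key nonnegative integrands
  have hπxm : ∀ x, Measurable fun ω => π x ω :=
    fun x => hπm.comp measurable_prodMk_left
  have hαωm : ∀ ω, Measurable fun x => α x ω :=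
    fun ω => hαm.comp (measurable_id.prodMk measurable_const)
  have hgm : Measurable (Function.uncurry fun x ω => ENNReal.ofReal (ψ (π x ω))) :=
    ENNReal.measurable_ofReal.comp (mψ.comp hπm)
  have hhm : Measurable (Function.uncurry fun x ω =>
      ENNReal.ofReal (α x ω * ψ ((α x ω)⁻¹))) :=
    ENNReal.measurable_ofReal.comp (hαm.mul (mψ.comp hαm.inv))
  -- π is integrable on the product
  have hπprod : Integrable (fun q : EuclideanSpace ℝ (Fin d) × Ω => π q.1 q.2) (μ0.prod P) := by
    refine ⟨hπm.aestronglyMeasurable, ?_⟩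
    rw [hasFiniteIntegral_iff_ofReal (Filter.Eventually.of_forall fun q : EuclideanSpace ℝ (Fin d) × Ω => (hπpos q.1 q.2).le)]
    have hswap : ∫⁻ q, ENNReal.ofReal (π q.1 q.2) ∂(μ0.prod P)
        = ∫⁻ ω, ∫⁻ x, ENNReal.ofReal (π x ω) ∂μ0 ∂P :=
      lintegral_prod_symm _ (ENNReal.measurable_ofReal.comp hπm).aemeasurable
    rw [hswap]
    have heq : ∀ᵐ ω ∂P, ∫⁻ x, ENNReal.ofReal (π x ω) ∂μ0 = 1 := by
      filter_upwards [hmapπ] with ω hω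
      have h1 : (μ0.withDensity fun x => ENNReal.ofReal (π x ω)) Set.univ
          = ∫⁻ x, ENNReal.ofReal (π x ω) ∂μ0 := by
        rw [withDensity_apply _ MeasurableSet.univ, setLIntegral_univ]
      rw [← h1, ← hω]
      haveI := Measure.isProbabilityMeasure_map (μ := μ0) (hFm ω).aemeasurable
      exact measure_univ
    rw [lintegral_congr_ae heq]
    simp
  have hπae : ∀ᵐ x ∂μ0, Integrable (fun ω => π x ω) P := hπprod.prod_right_ae
  have hmpos : ∀ᵐ x ∂μ0, 0 < ∫ ω, π x ω ∂P := by
    filter_upwards [hπae] with x hx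
    rw [integral_pos_iff_support_of_nonneg_ae
      (Filter.Eventually.of_forall fun ω => (hπpos x ω).le) hx]
    have hsup : Function.support (fun ω => π x ω) = Set.univ :=
      Set.eq_univ_of_forall fun ω => (hπpos x ω).ne'
    rw [hsup]
    simp
  -- pointwise Jensen
  have hJ : ∀ᵐ x ∂μ0, ENNReal.ofReal (φ (∫ ω, π x ω ∂P))
      ≤ ∫⁻ ω, ENNReal.ofReal (ψ (π x ω)) ∂P := by
    filter_upwards [hπae, hmpos] with x hx hpos
    have meas : AEStronglyMeasurable (fun ω => φ (π x ω)) P := by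
      have : (fun ω => φ (π x ω)) = fun ω => ψ (π x ω) :=
        funext fun ω => (hψeq _ (hπpos x ω)).symm
      rw [this]
      exact (mψ.comp (hπxm x)).aestronglyMeasurable
    have hj := jensen_aux P hconv (hπpos x) hx meas (fun ω => hφnn _ (hπpos x ω)) hpos
    refine hj.trans (le_of_eq (lintegral_congr fun ω => ?_))
    rw [hψeq _ (hπpos x ω)]
  -- the change-of-variables identity
  have key : ∫⁻ x, ∫⁻ ω, ENNReal.ofReal (ψ (π x ω)) ∂P ∂μ0
      = ∫⁻ x, ∫⁻ ω, ENNReal.ofReal (α x ω * ψ ((α x ω)⁻¹)) ∂P ∂μ0 := by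
    rw [lintegral_lintegral_swap hgm.aemeasurable, lintegral_lintegral_swap hhm.aemeasurable]
    refine lintegral_congr_ae ?_
    filter_upwards [hmapα, hrel] with ω hα hrelω
    have hmeasg : Measurable fun y => ENNReal.ofReal (ψ ((α y ω)⁻¹)) :=
      ENNReal.measurable_ofReal.comp (mψ.comp (hαωm ω).inv)
    calc ∫⁻ x, ENNReal.ofReal (ψ (π x ω)) ∂μ0
        = ∫⁻ x, ENNReal.ofReal (ψ ((α (Finv ω x) ω)⁻¹)) ∂μ0 := by
          refine lintegral_congr_ae ?_
          filter_upwards [hrelω] with x hx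
          rw [← hx, inv_inv]
      _ = ∫⁻ y, ENNReal.ofReal (ψ ((α y ω)⁻¹)) ∂(μ0.map (Finv ω)) :=
          (lintegral_map hmeasg (hFim ω)).symm
      _ = ∫⁻ y, ENNReal.ofReal (α y ω) * ENNReal.ofReal (ψ ((α y ω)⁻¹)) ∂μ0 := by
          have hden : Measurable fun x => ENNReal.ofReal (α x ω) :=
            ENNReal.measurable_ofReal.comp (hαωm ω)
          rw [hα, lintegral_withDensity_eq_lintegral_mul μ0 hden hmeasg]
          rfl
      _ = ∫⁻ x, ENNReal.ofReal (α x ω * ψ ((α x ω)⁻¹)) ∂μ0 := by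
          refine lintegral_congr fun x => ?_
          rw [ENNReal.ofReal_mul (hαpos x ω).le]
  -- nonnegativity facts about the right-hand integrand
  have hRnn : ∀ x ω, 0 ≤ α x ω * φ ((α x ω)⁻¹) :=
    fun x ω => mul_nonneg (hαpos x ω).le (hφnn _ (inv_pos.2 (hαpos x ω)))
  have hψφα : ∀ x ω, ENNReal.ofReal (α x ω * ψ ((α x ω)⁻¹))
      = ENNReal.ofReal (α x ω * φ ((α x ω)⁻¹)) := fun x ω => by
    rw [hψeq _ (inv_pos.2 (hαpos x ω))]
  -- finiteness of the right-hand side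
  have hRfin : ∫⁻ x, ∫⁻ ω, ENNReal.ofReal (α x ω * ψ ((α x ω)⁻¹)) ∂P ∂μ0 ≠ ⊤ := by
    have h3 := hint3.hasFiniteIntegral
    rw [hasFiniteIntegral_iff_ofReal
      (Filter.Eventually.of_forall fun q : EuclideanSpace ℝ (Fin d) × Ω => hRnn q.1 q.2)] at h3
    have hprod : ∫⁻ q, ENNReal.ofReal (α q.1 q.2 * φ ((α q.1 q.2)⁻¹)) ∂(μ0.prod P)
        = ∫⁻ x, ∫⁻ ω, ENNReal.ofReal (α x ω * ψ ((α x ω)⁻¹)) ∂P ∂μ0 := by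
      calc ∫⁻ q, ENNReal.ofReal (α q.1 q.2 * φ ((α q.1 q.2)⁻¹)) ∂(μ0.prod P)
          = ∫⁻ q, ENNReal.ofReal (α q.1 q.2 * ψ ((α q.1 q.2)⁻¹)) ∂(μ0.prod P) :=
            lintegral_congr fun q => (hψφα q.1 q.2).symm
        _ = ∫⁻ x, ∫⁻ ω, ENNReal.ofReal (α x ω * ψ ((α x ω)⁻¹)) ∂P ∂μ0 :=
            lintegral_prod _ hhm.aemeasurable
    rw [← hprod]
    exact h3.ne
  -- convert both sides to lintegrals and conclude
  have hLnn : ∀ᵐ x ∂μ0, 0 ≤ φ (∫ ω, π x ω ∂P) := hmpos.mono fun x hx => hφnn _ hx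
  rw [integral_eq_lintegral_of_nonneg_ae hLnn hint1.aestronglyMeasurable]
  have hIae : ∀ᵐ x ∂μ0, Integrable (fun ω => α x ω * φ ((α x ω)⁻¹)) P :=
    hint3.prod_right_ae
  have hRinner : ∀ᵐ x ∂μ0, ∫ ω, α x ω * φ ((α x ω)⁻¹) ∂P
      = (∫⁻ ω, ENNReal.ofReal (α x ω * ψ ((α x ω)⁻¹)) ∂P).toReal := by
    filter_upwards [hIae] with x hx
    rw [integral_eq_lintegral_of_nonneg_ae
      (Filter.Eventually.of_forall fun ω => hRnn x ω) hx.aestronglyMeasurable]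
    congr 1
    exact lintegral_congr fun ω => (hψφα x ω).symm
  have hfinae : ∀ᵐ x ∂μ0, (∫⁻ ω, ENNReal.ofReal (α x ω * ψ ((α x ω)⁻¹)) ∂P) < ⊤ := by
    filter_upwards [hIae] with x hx
    have hfi := hx.hasFiniteIntegral
    rw [hasFiniteIntegral_iff_ofReal (Filter.Eventually.of_forall fun ω => hRnn x ω)] at hfi
    refine lt_of_eq_of_lt ?_ hfi
    exact lintegral_congr fun ω => hψφα x ω
  have hmeasH : AEMeasurable
      (fun x => ∫⁻ ω, ENNReal.ofReal (α x ω * ψ ((α x ω)⁻¹)) ∂P) μ0 :=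
    (hhm.lintegral_prod_right).aemeasurable
  rw [integral_congr_ae hRinner, integral_toReal hmeasH hfinae]
  refine ENNReal.toReal_mono hRfin ?_
  exact le_trans (lintegral_mono_ae hJ) (le_of_eq key)
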